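/- arXiv:1102.2358 — 3 statements merged into one kernel-verified Lean document; each statement's English description precedes it below -/
import Mathlib

section
/- Key recovery in Stage 2: with C' = S·K'·S', D' = R·S·K'·S'·R', E' = R·K'·R' for R = diag(R₁₁, I₂), R' = diag(R'₁₁, I₂) (R₁₁, R'₁₁ ∈ GL₂(F)) and S = diag(I₂, S₂₂), S' = diag(I₂, S'₂₂) (S₂₂, S'₂₂ ∈ GL₂(F)), the blocks satisfy: K'₁₁ = C'₁₁, K'₂₂ = E'₂₂, and for any X ∈ Mat₂(F) with X·D'₁₂ = C'₁₂ we have X·E'₁₂ = K'₁₂, and for any Y with D'₂₁·Y = C'₂₁ we have E'₂₁·Y = K'₂₁. -/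
open Matrix

theorem stmt_9 {F : Type*} [Field F]
    (K' : Matrix (Fin 2 ⊕ Fin 2) (Fin 2 ⊕ Fin 2) F)
    (R₁₁ R'₁₁ S₂₂ S'₂₂ : GL (Fin 2) F)
    (R R' S S' : Matrix (Fin 2 ⊕ Fin 2) (Fin 2 ⊕ Fin 2) F)
    (hR : R = Matrix.fromBlocks (R₁₁ : Matrix (Fin 2) (Fin 2) F) 0 0 1)
    (hR' : R' = Matrix.fromBlocks (R'₁₁ : Matrix (Fin 2) (Fin 2) F) 0 0 1)
    (hS : S = Matrix.fromBlocks 1 0 0 (S₂₂ : Matrix (Fin 2) (Fin 2) F))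
    (hS' : S' = Matrix.fromBlocks 1 0 0 (S'₂₂ : Matrix (Fin 2) (Fin 2) F))
    (C' D' E' : Matrix (Fin 2 ⊕ Fin 2) (Fin 2 ⊕ Fin 2) F)
    (hC' : C' = S * K' * S') (hD' : D' = R * S * K' * S' * R') (hE' : E' = R * K' * R') :
    K'.toBlocks₁₁ = C'.toBlocks₁₁ ∧
    K'.toBlocks₂₂ = E'.toBlocks₂₂ ∧
    (∀ X : Matrix (Fin 2) (Fin 2) F, X * D'.toBlocks₁₂ = C'.toBlocks₁₂ →
      X * E'.toBlocks₁₂ = K'.toBlocks₁₂) ∧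
    (∀ Y : Matrix (Fin 2) (Fin 2) F, D'.toBlocks₂₁ * Y = C'.toBlocks₂₁ →
      E'.toBlocks₂₁ * Y = K'.toBlocks₂₁) := by
  obtain ⟨A, B, Cb, D, rfl⟩ : ∃ A B Cb D, K' = Matrix.fromBlocks A B Cb D :=
    ⟨_, _, _, _, (Matrix.fromBlocks_toBlocks K').symm⟩
  subst hR hR' hS hS' hC' hD' hE'
  simp only [Matrix.fromBlocks_multiply, Matrix.toBlocks_fromBlocks₁₁,
    Matrix.toBlocks_fromBlocks₁₂, Matrix.toBlocks_fromBlocks₂₁, Matrix.toBlocks_fromBlocks₂₂,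
    Matrix.mul_zero, Matrix.zero_mul, add_zero, zero_add, Matrix.mul_one, Matrix.one_mul]
  refine ⟨trivial, trivial, ?_, ?_⟩
  · intro X hX
    have h1 : X * ((R₁₁ : Matrix (Fin 2) (Fin 2) F) * B) = B := by
      have h := congrArg (fun M => M * ((S'₂₂⁻¹ : GL (Fin 2) F) : Matrix (Fin 2) (Fin 2) F)) hX
      simp only [mul_assoc, ← Units.val_mul, mul_inv_cancel, Units.val_one, mul_one] at h
      simpa [mul_assoc] using h
    rw [← mul_assoc] at h1 ⊢
    exact h1
  · intro Y hY
    have h1 : Cb * (R'₁₁ : Matrix (Fin 2) (Fin 2) F) * Y = Cb := by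
      have h := congrArg (fun M => ((S₂₂⁻¹ : GL (Fin 2) F) : Matrix (Fin 2) (Fin 2) F) * M) hY
      simp only [← mul_assoc, ← Units.val_mul, inv_mul_cancel, Units.val_one, one_mul] at h
      simpa [← mul_assoc] using h
    exact h1
end

section
/- HKS linearization attack correctness: let J, K ∈ Mat_m(F), b ∈ F^m, f(x) = x + ⋯ + x^{n−1}, with f(J)f(K) = f(K)f(J), and set w_A = f(J)b, w_B = f(K)b, k = f(J)f(K)b. If X ∈ Mat_m(F) satisfies X·b = w_A and X·f(K) = f(K)·X, then X·w_B = k. -/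
open Matrix Finset

theorem stmt_15 {F : Type*} [Field F] {m n : ℕ}
    (J K : Matrix (Fin m) (Fin m) F) (b : Fin m → F)
    (fJ fK : Matrix (Fin m) (Fin m) F)
    (hfJ : fJ = ∑ i ∈ Finset.Ico 1 n, J ^ i)
    (hfK : fK = ∑ i ∈ Finset.Ico 1 n, K ^ i)
    (hcomm : fJ * fK = fK * fJ)
    (wA wB k : Fin m → F) (hwA : wA = fJ.mulVec b) (hwB : wB = fK.mulVec b)
    (hk : k = (fJ * fK).mulVec b)
    (X : Matrix (Fin m) (Fin m) F)
    (hXb : X.mulVec b = wA) (hXcomm : X * fK = fK * X) :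
    X.mulVec wB = k := by
  subst hwA hwB hk
  rw [Matrix.mulVec_mulVec, hXcomm, hcomm, ← Matrix.mulVec_mulVec, hXb,
    Matrix.mulVec_mulVec]
end

section
/- RU linearization attack correctness: let C, D ∈ Mat_n(F) commute, d ∈ F^n, f_A, f_B ∈ F[x,y], w_A = f_A(C,D)d, w_B = f_B(C,D)d, and k = f_A(C,D)f_B(C,D)d. If X ∈ Mat_n(F) satisfies XC = CX, XD = DX, and Xd = w_A, then X·w_B = k. -/
open Matrix

/-- Evaluation of a bivariate polynomial at a pair of matrices. -/
noncomputable def evalMat {R : Type*} [CommRing R] {n : ℕ}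
    (f : MvPolynomial (Fin 2) R) (C D : Matrix (Fin n) (Fin n) R) :
    Matrix (Fin n) (Fin n) R :=
  ∑ d ∈ f.support, MvPolynomial.coeff d f • (C ^ d 0 * D ^ d 1)

lemma commute_evalMat {R : Type*} [CommRing R] {n : ℕ}
    (f : MvPolynomial (Fin 2) R) (C D X : Matrix (Fin n) (Fin n) R)
    (hXC : Commute X C) (hXD : Commute X D) :
    Commute X (evalMat f C D) := by
  apply Commute.sum_right
  intro i _
  exact ((hXC.pow_right _).mul_right (hXD.pow_right _)).smul_right _

theorem stmt_18 {F : Type*} [Field F] {n : ℕ}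
    (C D : Matrix (Fin n) (Fin n) F) (hCD : C * D = D * C)
    (d : Fin n → F) (fA fB : MvPolynomial (Fin 2) F)
    (wA wB k : Fin n → F)
    (hwA : wA = (evalMat fA C D).mulVec d) (hwB : wB = (evalMat fB C D).mulVec d)
    (hk : k = (evalMat fA C D * evalMat fB C D).mulVec d)
    (X : Matrix (Fin n) (Fin n) F)
    (hXC : X * C = C * X) (hXD : X * D = D * X) (hXd : X.mulVec d = wA) :
    X.mulVec wB = k := by
  have h1 : Commute X (evalMat fB C D) := commute_evalMat _ _ _ _ hXC hXD
  have h2 : Commute (evalMat fB C D) (evalMat fA C D) := by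
    apply commute_evalMat
    · exact (commute_evalMat fB C D C (Commute.refl C).symm hCD).symm
    · exact (commute_evalMat fB C D D hCD.symm (Commute.refl D)).symm
  calc X.mulVec wB = (X * evalMat fB C D).mulVec d := by
        rw [hwB, mulVec_mulVec]
    _ = (evalMat fB C D * X).mulVec d := by rw [h1.eq]
    _ = (evalMat fB C D).mulVec (X.mulVec d) := by rw [mulVec_mulVec]
    _ = (evalMat fB C D * evalMat fA C D).mulVec d := by rw [hXd, hwA, mulVec_mulVec]
    _ = k := by rw [h2.eq, hk]
end
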